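/- Let n ≥ 1, let X and Y be objects of D(𝒜) concentrated in [-n+1, 0], and let f : X → Y be any morphism. Then there exist an object Z of D(𝒜) concentrated in [-n+1, 0] and morphisms e : X → Z and m : Z → Y with f = m ∘ e such that: H^{-n+1}(m) is a monomorphism in 𝒜, H^{-n+1}(e) is an epimorphism in 𝒜, and H^i(e) is an isomorphism in 𝒜 for all i ≥ -n+2. (Existence of a [1,n]-factorization.) -/

import Mathlib

open CategoryTheory CategoryTheory.Limits CategoryTheory.Pretriangulated

universe w v u

variable {𝒜 : Type u} [Category.{v} 𝒜] [Abelian 𝒜] [HasDerivedCategory.{w} 𝒜]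

namespace DFactorAux

open ZeroObject

variable {A : Type u} [Category.{v} A] [Abelian A]

variable (M : CochainComplex A ℤ) (p : ℤ)

/-- degree-wise pieces of the truncation `τ_{≤ p} M`. -/
noncomputable def TX (i : ℤ) : A :=
  if i < p then M.X i else if i = p then M.cycles p else 0

noncomputable def TXIsoLt {i : ℤ} (h : i < p) : TX M p i ≅ M.X i :=
  eqToIso (by rw [TX, if_pos h])

noncomputable def TXIsoEq {i : ℤ} (h : i = p) : TX M p i ≅ M.cycles p :=
  eqToIso (by rw [TX, if_neg (by omega), if_pos h])

lemma TX_isZero {i : ℤ} (h : p < i) : IsZero (TX M p i) := by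
  rw [TX, if_neg (by omega), if_neg (by omega)]
  exact isZero_zero A

noncomputable def Td (i j : ℤ) : TX M p i ⟶ TX M p j :=
  if hij : i + 1 = j then
    if hj : j < p then
      (TXIsoLt M p (by omega)).hom ≫ M.d i j ≫ (TXIsoLt M p hj).inv
    else if hj' : j = p then
      (TXIsoLt M p (by omega)).hom ≫ M.toCycles i p ≫ (TXIsoEq M p hj').inv
    else 0
  else 0

lemma Td_comp_Td (i j k : ℤ) (hij : i + 1 = j) (hjk : j + 1 = k) :
    Td M p i j ≫ Td M p j k = 0 := by
  rw [Td, Td, dif_pos hij, dif_pos hjk]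
  by_cases hk : k < p
  · rw [dif_pos (show j < p by omega), dif_pos hk]
    simp
  · by_cases hk' : k = p
    · rw [dif_neg hk, dif_pos hk', dif_pos (show j < p by omega)]
      have : M.d i j ≫ M.toCycles j p = 0 := by
        rw [← cancel_mono (M.iCycles p)]
        simp [HomologicalComplex.toCycles_i]
      simp [this]
    · rw [dif_neg hk, dif_neg hk']
      simp

/-- the truncation `τ_{≤ p} M`. -/
noncomputable def T : CochainComplex A ℤ where
  X := TX M p
  d := Td M p
  shape i j h := dif_neg h
  d_comp_d' i j k hij hjk := Td_comp_Td M p i j k hij hjk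

noncomputable def ιf (i : ℤ) : TX M p i ⟶ M.X i :=
  if h : i < p then (TXIsoLt M p h).hom
  else if h' : i = p then (TXIsoEq M p h').hom ≫ M.iCycles p ≫ eqToHom (by rw [h'])
  else 0

noncomputable def ι : T M p ⟶ M where
  f := ιf M p
  comm' := by
    intro i j hij
    change i + 1 = j at hij
    show ιf M p i ≫ M.d i j = Td M p i j ≫ ιf M p j
    rw [Td, dif_pos hij, ιf, ιf]
    by_cases hj : j < p
    · rw [dif_pos (show i < p by omega), dif_pos hj, dif_pos hj]
      simp
    · by_cases hj' : j = p
      · rw [dif_pos (show i < p by omega), dif_neg hj, dif_pos hj', dif_neg hj,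
          dif_pos hj']
        subst hj'
        simp [HomologicalComplex.toCycles_i]
      · rw [dif_neg hj, dif_neg hj, dif_neg hj', dif_neg hj']
        by_cases hi : i < p
        · omega
        · by_cases hi' : i = p
          · rw [dif_neg hi, dif_pos hi']
            subst hi'
            simp
          · rw [dif_neg hi, dif_neg hi']
            simp

end DFactorAux

namespace DFactorAux2
open DFactorAux ZeroObject

variable {A : Type u} [Category.{v} A] [Abelian A]
variable (M : CochainComplex A ℤ) (p : ℤ)

noncomputable def UX (i : ℤ) : A :=
  if i < p then 0 else if i = p then cokernel (M.iCycles p) else M.X i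

noncomputable def UXIsoEq {i : ℤ} (h : i = p) : UX M p i ≅ cokernel (M.iCycles p) :=
  eqToIso (by rw [UX, if_neg (by omega), if_pos h])

noncomputable def UXIsoGt {i : ℤ} (h : p < i) : UX M p i ≅ M.X i :=
  eqToIso (by rw [UX, if_neg (by omega), if_neg (by omega)])

lemma UX_isZero {i : ℤ} (h : i < p) : IsZero (UX M p i) := by
  rw [UX, if_pos h]
  exact isZero_zero A

noncomputable def Ud (i j : ℤ) : UX M p i ⟶ UX M p j :=
  if hij : i + 1 = j then
    if hi : p < i then (UXIsoGt M p hi).hom ≫ M.d i j ≫ (UXIsoGt M p (by omega)).inv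
    else if hi' : i = p then
      (UXIsoEq M p hi').hom ≫ cokernel.desc (M.iCycles p) (M.d p j) (M.iCycles_d p j) ≫
        (UXIsoGt M p (by omega)).inv
    else 0
  else 0

lemma Ud_comp_Ud (i j k : ℤ) (hij : i + 1 = j) (hjk : j + 1 = k) :
    Ud M p i j ≫ Ud M p j k = 0 := by
  rw [Ud, Ud, dif_pos hij, dif_pos hjk]
  by_cases hi : p < i
  · rw [dif_pos hi, dif_pos (show p < j by omega)]
    simp
  · by_cases hi' : i = p
    · rw [dif_neg hi, dif_pos hi', dif_pos (show p < j by omega)]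
      have : cokernel.desc (M.iCycles p) (M.d p j) (M.iCycles_d p j) ≫ M.d j k = 0 := by
        rw [← cancel_epi (cokernel.π (M.iCycles p))]
        simp
      simp [reassoc_of% this, this]
    · rw [dif_neg hi, dif_neg hi']
      simp

noncomputable def U : CochainComplex A ℤ where
  X := UX M p
  d := Ud M p
  shape i j h := dif_neg h
  d_comp_d' i j k hij hjk := Ud_comp_Ud M p i j k hij hjk

noncomputable def πf (i : ℤ) : M.X i ⟶ UX M p i :=
  if h : p < i then (UXIsoGt M p h).inv
  else if h' : i = p then
    eqToHom (by rw [h']) ≫ cokernel.π (M.iCycles p) ≫ (UXIsoEq M p h').inv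
  else 0

noncomputable def π : M ⟶ U M p where
  f := πf M p
  comm' := by
    intro i j hij
    change i + 1 = j at hij
    show πf M p i ≫ Ud M p i j = M.d i j ≫ πf M p j
    rw [Ud, dif_pos hij, πf, πf]
    by_cases hi : p < i
    · rw [dif_pos hi, dif_pos hi, dif_pos (show p < j by omega)]
      simp
    · by_cases hi' : i = p
      · rw [dif_neg hi, dif_neg hi, dif_pos hi', dif_pos hi',
          dif_pos (show p < j by omega)]
        subst hi'
        simp
      · rw [dif_neg hi, dif_neg hi, dif_neg hi', dif_neg hi']
        by_cases hj : p < j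
        · omega
        · by_cases hj' : j = p
          · rw [dif_neg hj, dif_pos hj']
            subst hj'
            have hz : M.d i j ≫ cokernel.π (M.iCycles j) = 0 := by
              rw [← M.toCycles_i i j, Category.assoc, cokernel.condition, comp_zero]
            simp [reassoc_of% hz, hz]
          · rw [dif_neg hj, dif_neg hj']
            simp

lemma ιf_comp_πf (i : ℤ) : ιf M p i ≫ πf M p i = 0 := by
  rw [ιf, πf]
  by_cases h : i < p
  · rw [dif_pos h, dif_neg (by omega), dif_neg (by omega)]
    simp
  · by_cases h' : i = p
    · rw [dif_neg h, dif_pos h', dif_neg (by omega), dif_pos h']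
      subst h'
      simp
    · rw [dif_neg h, dif_neg h']
      simp

lemma ι_comp_π : ι M p ≫ π M p = 0 := by
  ext i
  show ιf M p i ≫ πf M p i = 0
  exact ιf_comp_πf M p i

/-- the short exact sequence `0 ⟶ τ_{≤p} M ⟶ M ⟶ U ⟶ 0`. -/
noncomputable def S : ShortComplex (HomologicalComplex A (ComplexShape.up ℤ)) :=
  ShortComplex.mk (ι M p) (π M p) (ι_comp_π M p)

end DFactorAux2

namespace DFactorAux2
open DFactorAux

variable {A : Type u} [Category.{v} A] [Abelian A]
variable (M : CochainComplex A ℤ) (p : ℤ)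

lemma helper₁ {X₁ X₂ X₃ : A} (f : X₁ ⟶ X₂) (g : X₂ ⟶ X₃) (w : f ≫ g = 0)
    (hf : IsIso f) (h3 : IsZero X₃) : (ShortComplex.mk f g w).ShortExact := by
  exact ShortComplex.Splitting.shortExact
    { r := inv f
      s := 0
      f_r := by simp
      s_g := h3.eq_of_src _ _
      id := by simp }

lemma helper₃ {X₁ X₂ X₃ : A} (f : X₁ ⟶ X₂) (g : X₂ ⟶ X₃) (w : f ≫ g = 0)
    (h1 : IsZero X₁) (hg : IsIso g) : (ShortComplex.mk f g w).ShortExact := by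
  exact ShortComplex.Splitting.shortExact
    { r := 0
      s := inv g
      f_r := h1.eq_of_src _ _
      s_g := by simp
      id := by simp }

lemma shortExact_S : (S M p).ShortExact := by
  apply HomologicalComplex.shortExact_of_degreewise_shortExact
  intro i
  have hrepr : (S M p).map (HomologicalComplex.eval A (ComplexShape.up ℤ) i) =
      ShortComplex.mk (ιf M p i) (πf M p i) (ιf_comp_πf M p i) := rfl
  rw [hrepr]
  by_cases h : i < p
  · refine helper₁ _ _ _ ?_ (UX_isZero M p h)
    rw [ιf, dif_pos h]
    infer_instance
  · by_cases h' : i = p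
    · subst h'
      refine ShortComplex.shortExact_of_iso
        (S₁ := ShortComplex.mk (M.iCycles i) (cokernel.π (M.iCycles i))
          (cokernel.condition _)) ?_ ?_
      · refine ShortComplex.isoMk (TXIsoEq M i rfl).symm (Iso.refl _) (UXIsoEq M i rfl).symm
          ?_ ?_
        · show (TXIsoEq M i rfl).inv ≫ ιf M i i = M.iCycles i ≫ 𝟙 _
          rw [ιf, dif_neg (by omega), dif_pos rfl]
          simp
        · show 𝟙 _ ≫ πf M i i = cokernel.π (M.iCycles i) ≫ (UXIsoEq M i rfl).inv
          rw [πf, dif_neg (by omega), dif_pos rfl]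
          simp
      · exact { exact := ShortComplex.exact_of_g_is_cokernel _ (cokernelIsCokernel _),
                mono_f := inferInstance, epi_g := inferInstance }
    · have h'' : p < i := by omega
      refine helper₃ _ _ _ (TX_isZero M p h'') ?_
      rw [πf, dif_pos h'']
      infer_instance

lemma mono_dbar : Mono (cokernel.desc (M.iCycles p) (M.d p (p+1)) (M.iCycles_d p (p+1))) := by
  have hk : IsLimit (KernelFork.ofι (M.iCycles p) (M.iCycles_d p (p+1))) :=
    M.cyclesIsKernel p (p+1) (by simp)
  set f := M.d p (p+1) with hf
  let e := IsLimit.conePointUniqueUpToIso hk (kernelIsKernel f)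
  have he : e.hom ≫ kernel.ι f = M.iCycles p :=
    IsLimit.conePointUniqueUpToIso_hom_comp hk (kernelIsKernel f) WalkingParallelPair.zero
  have key : cokernel.desc (M.iCycles p) f (M.iCycles_d p (p+1)) =
      (cokernel.mapIso _ _ e (Iso.refl _) (by simp [he])).hom ≫
        (Abelian.coimageImageComparison f ≫ Abelian.image.ι f) := by
    rw [← cancel_epi (cokernel.π (M.iCycles p))]
    simp [cokernel.mapIso, Abelian.coimage_image_factorisation]
  rw [key]
  infer_instance

end DFactorAux2

namespace DFactorAux3
open DFactorAux DFactorAux2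

variable {A : Type u} [Category.{v} A] [Abelian A]
variable (M : CochainComplex A ℤ) (p : ℤ)

lemma U_homology_isZero (j : ℤ) (hj : j ≤ p) : IsZero ((U M p).homology j) := by
  rw [← HomologicalComplex.exactAt_iff_isZero_homology]
  rcases lt_or_eq_of_le hj with h | h
  · rw [HomologicalComplex.exactAt_iff]
    exact ShortComplex.exact_of_isZero_X₂ _ (UX_isZero M p h)
  · subst h
    rw [(U M j).exactAt_iff' (j-1) j (j+1) (by simp) (by simp)]
    rw [ShortComplex.exact_iff_mono _ ((UX_isZero M j (by omega)).eq_of_src _ _)]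
    show Mono (Ud M j j (j+1))
    rw [Ud, dif_pos rfl, dif_neg (lt_irrefl j), dif_pos rfl]
    haveI := mono_dbar M j
    infer_instance

lemma T_homology_isZero_of_gt (j : ℤ) (hj : p < j) : IsZero ((T M p).homology j) := by
  rw [← HomologicalComplex.exactAt_iff_isZero_homology, HomologicalComplex.exactAt_iff]
  exact ShortComplex.exact_of_isZero_X₂ _ (TX_isZero M p hj)

lemma T_homology_isZero_of_lt (hM : ∀ j, j < p → IsZero (M.homology j))
    (j : ℤ) (hj : j < p) : IsZero ((T M p).homology j) := by
  have h1 := (shortExact_S M p).homology_exact₁ (j-1) j (by simp)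
  have hδ : (shortExact_S M p).δ (j-1) j (by simp) = 0 :=
    (U_homology_isZero M p (j-1) (by omega)).eq_of_src _ _
  haveI : Mono (HomologicalComplex.homologyMap (ι M p) j) := h1.mono_g hδ
  exact IsZero.of_mono (HomologicalComplex.homologyMap (ι M p) j) (hM j hj)

lemma isIso_homologyMap_ι : IsIso (HomologicalComplex.homologyMap (ι M p) p) := by
  have h1 := (shortExact_S M p).homology_exact₁ (p-1) p (by simp)
  have hδ : (shortExact_S M p).δ (p-1) p (by simp) = 0 :=
    (U_homology_isZero M p (p-1) (by omega)).eq_of_src _ _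
  haveI : Mono (HomologicalComplex.homologyMap (ι M p) p) := h1.mono_g hδ
  have h2 := (shortExact_S M p).homology_exact₂ p
  have hπ : HomologicalComplex.homologyMap (π M p) p = 0 :=
    (U_homology_isZero M p p (le_refl p)).eq_of_tgt _ _
  haveI : Epi (HomologicalComplex.homologyMap (ι M p) p) := h2.epi_f hπ
  exact isIso_of_mono_of_epi _

end DFactorAux3

namespace DFactorMain

variable {𝒜 : Type u} [Category.{v} 𝒜] [Abelian 𝒜]

lemma isZero_X₂_of_exact {S : ShortComplex 𝒜} (hS : S.Exact) (h1 : IsZero S.X₁)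
    (h3 : IsZero S.X₃) : IsZero S.X₂ := by
  haveI : Mono S.g := hS.mono_g (h1.eq_of_src _ _)
  exact IsZero.of_mono S.g h3

lemma mono_of_factorization {HX HZ HY : 𝒜} (He : HX ⟶ HZ) (Hm : HZ ⟶ HY) [Epi He]
    (hker : ∀ ⦃A' : 𝒜⦄ (k : A' ⟶ HX), k ≫ (He ≫ Hm) = 0 → k ≫ He = 0) : Mono Hm := by
  apply Preadditive.mono_of_cancel_zero
  intro A' k hk
  have h1 : pullback.fst He k ≫ He ≫ Hm = 0 := by
    rw [← Category.assoc, pullback.condition, Category.assoc, hk, comp_zero]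
  have h2 := hker _ h1
  rw [pullback.condition] at h2
  exact zero_of_epi_comp (pullback.snd He k) h2

lemma cancel_of_exact {S : ShortComplex 𝒜} (hS : S.Exact) {W : 𝒜} (q : S.X₂ ⟶ W)
    (hq : S.f ≫ q = 0) ⦃A' : 𝒜⦄ (k : A' ⟶ S.X₂) (hk : k ≫ S.g = 0) : k ≫ q = 0 := by
  haveI := hS.epi_toCycles
  have h6 : S.iCycles ≫ q = 0 := by
    rw [← cancel_epi S.toCycles, comp_zero, ← Category.assoc, S.toCycles_i]
    exact hq
  rw [← S.liftCycles_i k hk, Category.assoc, h6, comp_zero]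

variable [HasDerivedCategory.{w} 𝒜]
open DerivedCategory

lemma shift_bridge (j j' : ℤ) (hj : (-1:ℤ) + j = j') {A B : DerivedCategory 𝒜} (φ : A ⟶ B) :
    (homologyFunctor 𝒜 j).map ((shiftFunctor _ (-1:ℤ)).map φ) =
      ((homologyFunctor 𝒜 0).shiftIso (-1) j j' hj).hom.app A ≫
        (homologyFunctor 𝒜 j').map φ ≫
        ((homologyFunctor 𝒜 0).shiftIso (-1) j j' hj).inv.app B := by
  have h1 := (homologyFunctor 𝒜 0).shiftIso_hom_naturality (-1) j j' hj φ
  have h2 : (homologyFunctor 𝒜 j).map ((shiftFunctor _ (-1:ℤ)).map φ) ≫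
        ((homologyFunctor 𝒜 0).shiftIso (-1) j j' hj).hom.app B =
      ((homologyFunctor 𝒜 0).shiftIso (-1) j j' hj).hom.app A ≫
        (homologyFunctor 𝒜 j').map φ := h1
  exact (NatIso.naturality_2 ((homologyFunctor 𝒜 0).shiftIso (-1) j j' hj) φ).symm

lemma factors_bridge (j : ℤ) {K L : CochainComplex 𝒜 ℤ} (φ : K ⟶ L) :
    (homologyFunctor 𝒜 j).map (Q.map φ) =
      ((homologyFunctorFactors 𝒜 j).hom.app K) ≫ HomologicalComplex.homologyMap φ j ≫
        ((homologyFunctorFactors 𝒜 j).inv.app L) := by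
  have h1 : (homologyFunctor 𝒜 j).map (Q.map φ) ≫ ((homologyFunctorFactors 𝒜 j).hom.app L) =
      ((homologyFunctorFactors 𝒜 j).hom.app K) ≫ HomologicalComplex.homologyMap φ j :=
    (homologyFunctorFactors 𝒜 j).hom.naturality φ
  exact (NatIso.naturality_2 (homologyFunctorFactors 𝒜 j) φ).symm

end DFactorMain

/-- An object of the derived category is concentrated in degrees `[-n+1, 0]` if its
homology vanishes in degrees `< -n+1` and `> 0`. -/
def Concentrated (n : ℤ) (X : DerivedCategory 𝒜) : Prop :=
  ∀ i : ℤ, (i < -n + 1 ∨ 0 < i) → IsZero ((DerivedCategory.homologyFunctor 𝒜 i).obj X)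

open DerivedCategory DFactorAux DFactorAux2 DFactorAux3 DFactorMain in
theorem stmt_7 (n : ℤ) (hn : 1 ≤ n) (X Y : DerivedCategory 𝒜)
    (hX : Concentrated n X) (hY : Concentrated n Y) (f : X ⟶ Y) :
    ∃ (Z : DerivedCategory 𝒜) (e : X ⟶ Z) (m : Z ⟶ Y),
      Concentrated n Z ∧ e ≫ m = f ∧
      Mono ((DerivedCategory.homologyFunctor 𝒜 (-n + 1)).map m) ∧
      Epi ((DerivedCategory.homologyFunctor 𝒜 (-n + 1)).map e) ∧
      ∀ i : ℤ, -n + 2 ≤ i → IsIso ((DerivedCategory.homologyFunctor 𝒜 i).map e) := by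
  obtain ⟨C, g, h, hT⟩ := Pretriangulated.distinguished_cocone_triangle f
  -- homology of the cone vanishes outside `[-n, 0]`
  have hC : ∀ j : ℤ, (j < -n ∨ 0 < j) → IsZero ((homologyFunctor 𝒜 j).obj C) := by
    intro j hj
    exact isZero_X₂_of_exact
      (DerivedCategory.HomologySequence.exact₃ _ hT j (j+1) rfl)
      (hY j (by omega)) (hX (j+1) (by omega))
  -- a cochain complex representing the cone
  haveI : Q.EssSurj :=
    Localization.essSurj Q (HomologicalComplex.quasiIso 𝒜 (ComplexShape.up ℤ))
  obtain ⟨M, ⟨α⟩⟩ : ∃ (M : CochainComplex 𝒜 ℤ), Nonempty (Q.obj M ≅ C) :=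
    ⟨_, ⟨Q.objObjPreimageIso C⟩⟩
  have hM : ∀ j : ℤ, j < -n → IsZero (M.homology j) := fun j hj =>
    IsZero.of_iso (hC j (Or.inl hj))
      (((homologyFunctorFactors 𝒜 j).app M).symm ≪≫ (homologyFunctor 𝒜 j).mapIso α)
  -- the truncated complex and its homology
  have hQT : ∀ j : ℤ, j ≠ -n →
      IsZero ((homologyFunctor 𝒜 j).obj (Q.obj (T M (-n)))) := by
    intro j hj
    refine IsZero.of_iso ?_ ((homologyFunctorFactors 𝒜 j).app (T M (-n)))
    rcases lt_or_gt_of_ne hj with h' | h'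
    · exact T_homology_isZero_of_lt M (-n) hM j h'
    · exact T_homology_isZero_of_gt M (-n) j h'
  have hQι : IsIso ((homologyFunctor 𝒜 (-n)).map (Q.map (ι M (-n)))) := by
    exact (NatIso.isIso_map_iff (homologyFunctorFactors 𝒜 (-n)) (ι M (-n))).2
      (isIso_homologyMap_ι M (-n))
  obtain ⟨ιD, hιDdef⟩ : ∃ ιD : Q.obj (T M (-n)) ⟶ C,
      ιD = Q.map (ι M (-n)) ≫ α.hom := ⟨_, rfl⟩
  haveI hιDiso : IsIso ((homologyFunctor 𝒜 (-n)).map ιD) := by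
    rw [hιDdef, Functor.map_comp]
    haveI := hQι
    infer_instance
  -- the inverse rotation of the cone triangle
  have hT₂ := inv_rot_of_distTriang _ hT
  obtain ⟨w, hwdef⟩ : ∃ w : (Q.obj (T M (-n)))⟦(-1:ℤ)⟧ ⟶ X,
      w = (shiftFunctor _ (-1:ℤ)).map ιD ≫ (Triangle.mk f g h).invRotate.mor₁ := ⟨_, rfl⟩
  obtain ⟨Z, e, v, hT₃⟩ := Pretriangulated.distinguished_cocone_triangle w
  -- homology of the shifted truncation
  have hW : ∀ j : ℤ, j ≠ -n + 1 →
      IsZero ((homologyFunctor 𝒜 j).obj ((Q.obj (T M (-n)))⟦(-1:ℤ)⟧)) := by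
    intro j hj
    exact IsZero.of_iso (hQT (j-1) (by omega))
      (((homologyFunctor 𝒜 0).shiftIso (-1) j (j-1) (by omega)).app _)
  -- epi / mono properties of e
  have hepi : ∀ i : ℤ, -n + 1 ≤ i → Epi ((homologyFunctor 𝒜 i).map e) := by
    intro i hi
    exact (DerivedCategory.HomologySequence.epi_homologyMap_mor₂_iff _ hT₃ i (i+1) rfl).2
      ((hW (i+1) (by omega)).eq_of_tgt _ _)
  have hmono : ∀ i : ℤ, -n + 2 ≤ i → Mono ((homologyFunctor 𝒜 i).map e) := by
    intro i hi
    exact (DerivedCategory.HomologySequence.mono_homologyMap_mor₂_iff _ hT₃ i).2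
      ((hW i (by omega)).eq_of_src _ _)
  -- mono of H^{-n+1} of the inverse rotation morphism
  haveI hmonoh : Mono ((homologyFunctor 𝒜 (-n+1)).map (Triangle.mk f g h).invRotate.mor₁) := by
    rw [DerivedCategory.HomologySequence.mono_homologyMap_mor₁_iff _ hT₂ (-n) (-n+1) rfl]
    exact (hY (-n) (by omega)).eq_of_src _ _
  haveI hshiso : IsIso ((homologyFunctor 𝒜 (-n+1)).map
      ((shiftFunctor (DerivedCategory 𝒜) (-1:ℤ)).map ιD)) := by
    exact (NatIso.isIso_map_iff ((homologyFunctor 𝒜 0).shiftIso (-1) (-n+1) (-n) (by omega))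
      ιD).2 hιDiso
  haveI hmonow : Mono ((homologyFunctor 𝒜 (-n+1)).map w) := by
    erw [hwdef, Functor.map_comp]
    exact @mono_comp _ _ _ _ _ _ inferInstance _ hmonoh
  -- existence of m
  have hwf : w ≫ f = 0 := by
    have h0 : (Triangle.mk f g h).invRotate.mor₁ ≫ f = 0 :=
      comp_distTriang_mor_zero₁₂ _ hT₂
    erw [hwdef, Category.assoc, h0, comp_zero]
  obtain ⟨m, hm⟩ := Triangle.yoneda_exact₂ _ hT₃ f hwf
  -- the key vanishing for the kernel argument
  have hwe : (homologyFunctor 𝒜 (-n+1)).map (Triangle.mk f g h).invRotate.mor₁ ≫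
      (homologyFunctor 𝒜 (-n+1)).map e = 0 := by
    have h1 : w ≫ e = 0 := comp_distTriang_mor_zero₁₂ _ hT₃
    have h2 : (homologyFunctor 𝒜 (-n+1)).map ((shiftFunctor (DerivedCategory 𝒜) (-1:ℤ)).map ιD) ≫
        ((homologyFunctor 𝒜 (-n+1)).map (Triangle.mk f g h).invRotate.mor₁ ≫
          (homologyFunctor 𝒜 (-n+1)).map e) = 0 := by
      erw [← Category.assoc, ← Functor.map_comp, ← Functor.map_comp, ← hwdef, h1,
        Functor.map_zero]
    refine (cancel_epi ((homologyFunctor 𝒜 (-n+1)).map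
      ((shiftFunctor (DerivedCategory 𝒜) (-1:ℤ)).map ιD))).1 ?_
    erw [comp_zero]
    exact h2
  -- mono of H^{-n+1}(m)
  haveI : Epi ((homologyFunctor 𝒜 (-n+1)).map e) := hepi (-n+1) (by omega)
  have hmonom : Mono ((homologyFunctor 𝒜 (-n+1)).map m) := by
    apply mono_of_factorization ((homologyFunctor 𝒜 (-n+1)).map e)
    intro A' k hk
    have hk' : k ≫ (homologyFunctor 𝒜 (-n+1)).map f = 0 := by
      have : (homologyFunctor 𝒜 (-n+1)).map f =
          (homologyFunctor 𝒜 (-n+1)).map e ≫ (homologyFunctor 𝒜 (-n+1)).map m := by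
        erw [hm, Functor.map_comp]
        rfl
      rw [this]
      exact hk
    have hex2 := DerivedCategory.HomologySequence.exact₂ _ hT₂ (-n+1)
    exact cancel_of_exact hex2 ((homologyFunctor 𝒜 (-n+1)).map e) hwe k hk'
  refine ⟨Z, e, m, ?_, hm.symm, hmonom, hepi (-n+1) (by omega), fun i hi => ?_⟩
  · -- concentration of Z
    intro i hi
    by_cases hip : i = -n
    · subst hip
      have hexact := DerivedCategory.HomologySequence.exact₃ _ hT₃ (-n) (-n+1) rfl
      haveI hδm : Mono (DerivedCategory.HomologySequence.δ (Triangle.mk w e v)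
          (-n) (-n+1) rfl) :=
        hexact.mono_g ((hX (-n) (by omega)).eq_of_src _ _)
      have hδc := DerivedCategory.HomologySequence.δ_comp (Triangle.mk w e v) hT₃
        (-n) (-n+1) rfl
      haveI : Mono ((homologyFunctor 𝒜 (-n+1)).map (Triangle.mk w e v).mor₁) := hmonow
      have hδ0 : DerivedCategory.HomologySequence.δ (Triangle.mk w e v)
          (-n) (-n+1) rfl = 0 := zero_of_comp_mono _ hδc
      rw [hδ0] at hδm
      haveI := hδm
      exact @IsZero.of_mono_zero _ _ _ _ _ hδm
    · exact isZero_X₂_of_exact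
        (DerivedCategory.HomologySequence.exact₃ _ hT₃ i (i+1) rfl)
        (hX i hi) (hW (i+1) (by omega))
  · -- isomorphisms in degrees ≥ -n+2
    haveI := hmono i hi
    haveI := hepi i (by omega)
    exact isIso_of_mono_of_epi _
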